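/- For every integer e ≥ 6, the sequence H with H_0 = H_e = 1 and H_i = min(C(i+2,2), (i+1)+C(e-i+1,2)) + min(C(e-i+2,2), (e-i+1)+C(i+1,2)) for 1 ≤ i ≤ e-1 is not an SI-sequence: its first difference (1, H_1-1, H_2-H_1, H_3-H_2, ...) equals (1, e+3, 4, 6, ...) and fails Macaulay's growth bound from degree 2 to degree 3. -/

import Mathlib

/-- `ns = [n_i, n_{i-1}, …, n_j]` is the list of "tops" of the `i`-binomial
(Macaulay) expansion of `n`:  the tops are strictly decreasing, the bottoms are
`i, i-1, …, j` with `j = i - ns.length + 1 ≥ 1`, the last top `n_j` satisfies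
`n_j ≥ j`, and `n = C(n_i,i) + C(n_{i-1},i-1) + ⋯ + C(n_j,j)`. -/
def IsBinomialExpansion (n i : ℕ) (ns : List ℕ) : Prop :=
  ns ≠ [] ∧ ns.length ≤ i ∧ ns.Chain' (· > ·) ∧
  i + 1 ≤ ns.getLast! + ns.length ∧
  n = ∑ k ∈ Finset.range ns.length, (ns.getD k 0).choose (i - k)

/-- `MacaulayNext n i m` says `m = n^{<i>}`, computed from the `i`-binomial
expansion of `n` by `n^{<i>} = C(n_i+1,i+1) + ⋯ + C(n_j+1,j+1)`. -/
def MacaulayNext (n i m : ℕ) : Prop :=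
  ∃ ns, IsBinomialExpansion n i ns ∧
    m = ∑ k ∈ Finset.range ns.length, (ns.getD k 0 + 1).choose (i - k + 1)

/-- `MacaulayLE a i b` says `b ≤ a^{<i>}`, with the convention `0^{<i>} = 0`. -/
def MacaulayLE (a i b : ℕ) : Prop :=
  if a = 0 then b = 0 else ∃ m, MacaulayNext a i m ∧ b ≤ m

/-- `(c 0, c 1, …, c e)` is an O-sequence (satisfies Macaulay's condition). -/
def IsOSequence (c : ℕ → ℕ) (e : ℕ) : Prop :=
  c 0 = 1 ∧ ∀ i, 1 ≤ i → i + 1 ≤ e → MacaulayLE (c i) i (c (i + 1))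

/-- `(H 0, …, H e)` is symmetric. -/
def IsSymmetric (H : ℕ → ℕ) (e : ℕ) : Prop :=
  ∀ i ≤ e, H i = H (e - i)

/-- `(H 0, …, H e)` is unimodal. -/
def IsUnimodal (H : ℕ → ℕ) (e : ℕ) : Prop :=
  ∃ m, m ≤ e ∧ (∀ i, i < m → H i ≤ H (i + 1)) ∧
    ∀ i, m ≤ i → i < e → H (i + 1) ≤ H i

/-- The first difference of `H` (with `H_{-1} = 0`). -/
def FirstDiff (H : ℕ → ℕ) : ℕ → ℕ :=
  fun i => if i = 0 then H 0 else H i - H (i - 1)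

/-- `(H 0, …, H e)` is an SI-sequence: it is symmetric and the first
difference of its first half `(H 0, …, H ⌊e/2⌋)` is an O-sequence. -/
def IsSISequence (H : ℕ → ℕ) (e : ℕ) : Prop :=
  IsSymmetric H e ∧ IsOSequence (FirstDiff H) (e / 2)


lemma myaux : ∀ k : ℕ, k + 10 ≤ (k+5).choose 2 := by
  intro k
  induction k with
  | zero => decide
  | succ n ih =>
    have h := Nat.choose_succ_succ' (n+5) 1
    simp [Nat.choose_one_right] at h
    have e2 : n + 1 + 5 = n + 5 + 1 := by omega
    rw [e2]; omega

lemma not_mac : ¬ MacaulayLE 4 2 6 := by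
  simp only [MacaulayLE, MacaulayNext, IsBinomialExpansion]
  norm_num
  rintro m ns hne hlen hchain hlast hsum hm
  rcases ns with _|⟨a,_|⟨b,_|⟨c,t⟩⟩⟩
  · exact absurd rfl hne
  · simp [Finset.sum_range_one] at hsum hm
    simp [List.getLast!] at hlast
    rcases le_or_gt a 3 with ha | ha
    · interval_cases a <;> norm_num at hsum
    · have h6 : (6:ℕ) ≤ a.choose 2 := by
        calc (6:ℕ) = Nat.choose 4 2 := by decide
        _ ≤ a.choose 2 := Nat.choose_le_choose 2 (by omega)
      omega
  · simp [Finset.sum_range_succ] at hsum hm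
    simp [List.getLast!] at hlast
    have hab : b < a := by simpa [List.Chain', List.isChain_pair] using hchain
    have ha3 : a ≤ 3 := by
      by_contra hc
      have h6 : (6:ℕ) ≤ a.choose 2 := by
        calc (6:ℕ) = Nat.choose 4 2 := by decide
        _ ≤ a.choose 2 := Nat.choose_le_choose 2 (by omega)
      omega
    interval_cases a <;> interval_cases b
    all_goals norm_num at hsum
    all_goals norm_num at hm
    all_goals omega
  · simp at hlen

lemma key_lemma (e : ℕ) (he : 6 ≤ e) (h H : ℕ → ℕ)
    (hhdef : ∀ i, h i = min ((i + 2).choose 2) ((i + 1) + (e - i + 1).choose 2))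
    (hHdef : ∀ i, H i = if i = 0 ∨ i = e then 1 else h i + h (e - i)) :
    FirstDiff H 0 = 1 ∧ FirstDiff H 1 = e + 3 ∧ FirstDiff H 2 = 4 ∧
      FirstDiff H 3 = 6 ∧ ¬ MacaulayLE (FirstDiff H 2) 2 (FirstDiff H 3) ∧
      ¬ IsSISequence H e := by
  obtain ⟨k, rfl⟩ : ∃ k, e = k + 6 := ⟨e - 6, by omega⟩
  have hc1 : k + 11 ≤ (k+6).choose 2 := by
    have := myaux (k+1); rwa [show k+1+5 = k+6 from by omega, show k+1+10 = k+11 from by omega] at this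
  have hc2 : k + 12 ≤ (k+7).choose 2 := by
    have := myaux (k+2); rwa [show k+2+5 = k+7 from by omega, show k+2+10 = k+12 from by omega] at this
  have hc0 : k + 10 ≤ (k+5).choose 2 := myaux k
  have hc4 : (6:ℕ) ≤ (k+4).choose 2 := by
    calc (6:ℕ) = Nat.choose 4 2 := by decide
    _ ≤ (k+4).choose 2 := Nat.choose_le_choose 2 (by omega)
  have h1 : h 1 = 3 := by
    rw [hhdef, show k + 6 - 1 + 1 = k + 6 from by omega,
      show ((1:ℕ) + 2).choose 2 = 3 from by decide]
    omega
  have h2 : h 2 = 6 := by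
    rw [hhdef, show k + 6 - 2 + 1 = k + 5 from by omega,
      show ((2:ℕ) + 2).choose 2 = 6 from by decide]
    omega
  have h3 : h 3 = 10 := by
    rw [hhdef, show k + 6 - 3 + 1 = k + 4 from by omega,
      show ((3:ℕ) + 2).choose 2 = 10 from by decide]
    omega
  have he1 : h (k + 5) = k + 7 := by
    rw [hhdef, show k + 6 - (k + 5) + 1 = 2 from by omega,
      show Nat.choose 2 2 = 1 from by decide, show k + 5 + 2 = k + 7 from by omega]
    omega
  have he2 : h (k + 4) = k + 8 := by
    rw [hhdef, show k + 6 - (k + 4) + 1 = 3 from by omega,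
      show Nat.choose 3 2 = 3 from by decide, show k + 4 + 2 = k + 6 from by omega]
    omega
  have he3 : h (k + 3) = k + 10 := by
    rw [hhdef, show k + 6 - (k + 3) + 1 = 4 from by omega,
      show Nat.choose 4 2 = 6 from by decide, show k + 3 + 2 = k + 5 from by omega]
    omega
  have hH0 : H 0 = 1 := by rw [hHdef]; simp
  have hH1 : H 1 = k + 10 := by
    rw [hHdef, if_neg (by omega), show k + 6 - 1 = k + 5 from by omega, h1, he1]; omega
  have hH2 : H 2 = k + 14 := by
    rw [hHdef, if_neg (by omega), show k + 6 - 2 = k + 4 from by omega, h2, he2]; omega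
  have hH3 : H 3 = k + 20 := by
    rw [hHdef, if_neg (by omega), show k + 6 - 3 = k + 3 from by omega, h3, he3]; omega
  have hd0 : FirstDiff H 0 = 1 := by simp [FirstDiff, hH0]
  have hd1 : FirstDiff H 1 = k + 6 + 3 := by
    simp only [FirstDiff]; norm_num [hH0, hH1]
  have hd2 : FirstDiff H 2 = 4 := by
    simp only [FirstDiff]; norm_num [hH1, hH2]; omega
  have hd3 : FirstDiff H 3 = 6 := by
    simp only [FirstDiff]; norm_num [hH2, hH3]; omega
  refine ⟨hd0, hd1, hd2, hd3, ?_, ?_⟩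
  · rw [hd2, hd3]; exact not_mac
  · rintro ⟨-, -, hO⟩
    have := hO 2 (by norm_num) (by omega)
    rw [hd2, hd3] at this
    exact not_mac this

/-- For every `e ≥ 6`, the Gorenstein sequence `H` is not an SI-sequence:
its first difference starts `(1, e+3, 4, 6, …)` and fails Macaulay's bound
from degree 2 to degree 3 (`6 > 4^{<2>} = 5`). -/
theorem trivial_extension_not_SI (e : ℕ) (he : 6 ≤ e) :
    letI h : ℕ → ℕ := fun i => min ((i + 2).choose 2) ((i + 1) + (e - i + 1).choose 2)
    letI H : ℕ → ℕ := fun i => if i = 0 ∨ i = e then 1 else h i + h (e - i)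
    FirstDiff H 0 = 1 ∧ FirstDiff H 1 = e + 3 ∧ FirstDiff H 2 = 4 ∧
      FirstDiff H 3 = 6 ∧ ¬ MacaulayLE (FirstDiff H 2) 2 (FirstDiff H 3) ∧
      ¬ IsSISequence H e := by
  exact key_lemma e he _ _ (fun i => rfl) (fun i => rfl)
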